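/- arXiv:1101.3901 — 2 statements merged into one kernel-verified Lean document; each statement's English description precedes it below -/
import Mathlib

section
/- Let X be a separable Fréchet space (or more generally a separable complete metrizable topological vector space) and T : X → X a continuous linear operator. Suppose there exist dense subsets Z, Y ⊆ X and a map S : Y → Y such that (a) for each z ∈ Z, Tⁿ(z) → 0 as n → ∞; (b) for each y ∈ Y, Sⁿ(y) → 0 as n → ∞; (c) T ∘ S = id on Y. Then T is hypercyclic, i.e., there exists x ∈ X whose orbit {x, T(x), T²(x), ...} is dense in X. -/
open Filter Topology

/-- Kitai–Gethner–Shapiro hypercyclicity criterion. -/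
theorem hypercyclicity_criterion
    {X : Type*} [UniformSpace X] [AddCommGroup X] [Module ℂ X]
    [IsUniformAddGroup X] [ContinuousSMul ℂ X] [CompleteSpace X]
    [TopologicalSpace.SeparableSpace X] [TopologicalSpace.MetrizableSpace X]
    (T : X →L[ℂ] X) (Z Y : Set X) (hZ : Dense Z) (hY : Dense Y)
    (S : X → X) (hSY : ∀ y ∈ Y, S y ∈ Y)
    (ha : ∀ z ∈ Z, Tendsto (fun n : ℕ => (T ^ n) z) atTop (𝓝 0))
    (hb : ∀ y ∈ Y, Tendsto (fun n : ℕ => S^[n] y) atTop (𝓝 0))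
    (hc : ∀ y ∈ Y, T (S y) = y) :
    ∃ x : X, Dense (Set.range fun n : ℕ => (T ^ n) x) := by
  -- countably generated uniformity
  haveI : (uniformity X).IsCountablyGenerated := by
    rw [uniformity_eq_comap_nhds_zero X]
    infer_instance
  haveI : SecondCountableTopology X := UniformSpace.secondCountable_of_separable X
  -- basic iterate facts
  have key : ∀ y ∈ Y, ∀ n : ℕ, S^[n] y ∈ Y ∧ (T ^ n) (S^[n] y) = y := by
    intro y hy n
    induction n with
    | zero => simpa using hy
    | succ n ih =>
      constructor
      · rw [Function.iterate_succ_apply']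
        exact hSY _ ih.1
      · rw [Function.iterate_succ_apply', pow_succ, ContinuousLinearMap.mul_apply,
          hc _ ih.1, ih.2]
  -- topological transitivity
  have trans : ∀ U V : Set X, IsOpen U → IsOpen V → U.Nonempty → V.Nonempty →
      ∃ x ∈ U, ∃ n : ℕ, (T ^ n) x ∈ V := by
    intro U V hU hV hUne hVne
    obtain ⟨z, hzU, hzZ⟩ := hZ.inter_open_nonempty U hU hUne
    obtain ⟨y, hyV, hyY⟩ := hY.inter_open_nonempty V hV hVne
    have h1 : Tendsto (fun n : ℕ => z + S^[n] y) atTop (𝓝 z) := by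
      have := (tendsto_const_nhds : Tendsto (fun _ : ℕ => z) atTop (𝓝 z)).add (hb y hyY)
      simpa using this
    have h2 : Tendsto (fun n : ℕ => (T ^ n) (z + S^[n] y)) atTop (𝓝 y) := by
      have : (fun n : ℕ => (T ^ n) (z + S^[n] y)) = fun n : ℕ => (T ^ n) z + y := by
        funext n
        rw [map_add, (key y hyY n).2]
      rw [this]
      have := (ha z hzZ).add (tendsto_const_nhds : Tendsto (fun _ : ℕ => y) atTop (𝓝 y))
      simpa using this
    have e1 : ∀ᶠ n : ℕ in atTop, z + S^[n] y ∈ U := h1.eventually (hU.mem_nhds hzU)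
    have e2 : ∀ᶠ n : ℕ in atTop, (T ^ n) (z + S^[n] y) ∈ V := h2.eventually (hV.mem_nhds hyV)
    obtain ⟨n, hn1, hn2⟩ := (e1.and e2).exists
    exact ⟨z + S^[n] y, hn1, n, hn2⟩
  -- Baire argument
  set 𝒰 := TopologicalSpace.countableBasis X
  haveI : Countable 𝒰 := (TopologicalSpace.countable_countableBasis X).to_subtype
  have hGopen : ∀ B : 𝒰, IsOpen (⋃ n : ℕ, (fun x => (T ^ n) x) ⁻¹' (B : Set X)) := by
    intro B
    exact isOpen_iUnion fun n =>
      ((TopologicalSpace.isOpen_of_mem_countableBasis B.2).preimage (T ^ n).continuous)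
  have hGdense : ∀ B : 𝒰, Dense (⋃ n : ℕ, (fun x => (T ^ n) x) ⁻¹' (B : Set X)) := by
    intro B
    rw [dense_iff_inter_open]
    intro U hU hUne
    have hBopen : IsOpen (B : Set X) := TopologicalSpace.isOpen_of_mem_countableBasis B.2
    have hBne : (B : Set X).Nonempty :=
      TopologicalSpace.nonempty_of_mem_countableBasis B.2
    obtain ⟨x, hxU, n, hxn⟩ := trans U B hU hBopen hUne hBne
    exact ⟨x, hxU, Set.mem_iUnion.2 ⟨n, hxn⟩⟩
  have hD : Dense (⋂ B : 𝒰, ⋃ n : ℕ, (fun x => (T ^ n) x) ⁻¹' (B : Set X)) :=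
    dense_iInter_of_isOpen hGopen hGdense
  haveI : Nonempty X := ⟨0⟩
  obtain ⟨x, hx⟩ := hD.nonempty
  refine ⟨x, dense_iff_inter_open.2 fun U hU hUne => ?_⟩
  obtain ⟨u, hu⟩ := hUne
  obtain ⟨B, hB𝒰, huB, hBU⟩ :=
    (TopologicalSpace.isBasis_countableBasis X).exists_subset_of_mem_open hu hU
  have := Set.mem_iInter.1 hx ⟨B, hB𝒰⟩
  obtain ⟨n, hn⟩ := Set.mem_iUnion.1 this
  exact ⟨(T ^ n) x, hBU hn, n, rfl⟩
end

section
/- Let X be a separable Baire topological vector space and L : X → X a continuous linear hypercyclic operator such that every nonzero operator of the form Σᵢ₌₀ᵐ λᵢ Lⁱ (λᵢ ∈ ℂ) has dense range. Then the set of hypercyclic vectors for L is dense-lineable: there exists a dense linear subspace M of X such that every nonzero element of M is a hypercyclic vector for L. Concretely, if f is a hypercyclic vector for L, then M = span{Lⁿ(f) : n ∈ ℕ₀} works. -/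
open Filter Topology

/-- The hypercyclic vectors of a hypercyclic operator all of whose nonzero polynomials
have dense range are dense-lineable: the span of an orbit of a hypercyclic vector is a
dense subspace all of whose nonzero elements are hypercyclic. -/
theorem hypercyclic_dense_lineable
    {X : Type*} [TopologicalSpace X] [AddCommGroup X] [Module ℂ X]
    [IsTopologicalAddGroup X] [ContinuousSMul ℂ X]
    [TopologicalSpace.SeparableSpace X] [BaireSpace X]
    (L : X →L[ℂ] X)
    (hdr : ∀ (m : ℕ) (c : Fin (m + 1) → ℂ), (∃ i, c i ≠ 0) →
      DenseRange (fun x : X => ∑ i : Fin (m + 1), c i • (L ^ (i : ℕ)) x))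
    (f : X) (hf : Dense (Set.range fun n : ℕ => (L ^ n) f)) :
    Dense ((Submodule.span ℂ (Set.range fun n : ℕ => (L ^ n) f) : Submodule ℂ X) : Set X) ∧
    ∀ g ∈ Submodule.span ℂ (Set.range fun n : ℕ => (L ^ n) f), g ≠ 0 →
      Dense (Set.range fun n : ℕ => (L ^ n) g) := by
  constructor
  · exact hf.mono Submodule.subset_span
  · intro g hg hg0
    -- write g as a finite combination of orbit elements
    rw [Submodule.mem_span_set'] at hg
    obtain ⟨n, a, v, hsum⟩ := hg
    -- each v i is L^(k i) f
    have hk : ∀ i : Fin n, ∃ k : ℕ, (L ^ k) f = (v i : X) := fun i => (v i).2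
    choose k hkk using hk
    set m : ℕ := Finset.univ.sup k with hm
    have hkm : ∀ i, k i < m + 1 := fun i =>
      Nat.lt_succ_of_le (Finset.le_sup (Finset.mem_univ i))
    set φ : Fin n → Fin (m + 1) := fun i => ⟨k i, hkm i⟩ with hφ
    set c : Fin (m + 1) → ℂ :=
      fun j => ∑ i ∈ Finset.univ.filter (fun i => φ i = j), a i with hc
    -- the combination rewritten with coefficients indexed by Fin (m+1)
    have hrep : ∑ j : Fin (m + 1), c j • (L ^ (j : ℕ)) f = g := by
      rw [← hsum]
      rw [← Finset.sum_fiberwise (Finset.univ : Finset (Fin n)) φ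
        (fun i => a i • (v i : X))]
      refine Finset.sum_congr rfl fun j _ => ?_
      rw [hc, Finset.sum_smul]
      refine Finset.sum_congr rfl fun i hi => ?_
      rw [Finset.mem_filter] at hi
      have : (j : ℕ) = k i := by rw [← hi.2]
      rw [this, hkk]
    -- some coefficient is nonzero
    have hcne : ∃ j, c j ≠ 0 := by
      by_contra h
      push_neg at h
      apply hg0
      rw [← hrep]
      simp [h]
    -- the operator T = ∑ c j • L^j
    set T : X → X := fun x => ∑ j : Fin (m + 1), c j • (L ^ (j : ℕ)) x with hT
    have hTcont : Continuous T := by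
      apply continuous_finset_sum
      intro j _
      exact ((L ^ (j : ℕ)).continuous).const_smul _
    have hTdr : DenseRange T := hdr m c hcne
    have hTf : T f = g := hrep
    -- T commutes with powers of L
    have hcomm : ∀ (p : ℕ) (x : X), T ((L ^ p) x) = (L ^ p) (T x) := by
      intro p x
      rw [hT]
      simp only [map_sum, map_smul]
      refine Finset.sum_congr rfl fun j _ => ?_
      congr 1
      have h := ((Commute.refl L).pow_pow (j : ℕ) p)
      calc (L ^ (j : ℕ)) ((L ^ p) x) = (L ^ (j : ℕ) * L ^ p) x := rfl
        _ = (L ^ p * L ^ (j : ℕ)) x := by rw [h]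
        _ = (L ^ p) ((L ^ (j : ℕ)) x) := rfl
    -- the orbit of g is the image under T of the orbit of f
    have horb : (Set.range fun n : ℕ => (L ^ n) g)
        = T '' (Set.range fun n : ℕ => (L ^ n) f) := by
      ext x
      constructor
      · rintro ⟨p, rfl⟩
        exact ⟨(L ^ p) f, ⟨p, rfl⟩, by rw [hcomm, hTf]⟩
      · rintro ⟨y, ⟨p, rfl⟩, rfl⟩
        exact ⟨p, by rw [hcomm, hTf]⟩
    rw [horb]
    exact hTdr.dense_image hTcont hf
end
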